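/- Define the labeling gadget L on vertex set [B]^k where for each color i ∈ [k] there is a directed edge of color i from (x_1,...,x_i, y_{(i+1)},...,x_k) to (x_1,...,y_i, x_{(i+1)},...,x_k) whenever y_i > x_i and y_{(i+1)} > x_{(i+1)} (indices mod k, other coordinates equal). Then every directed cycle in L uses at least one edge of each color. -/
import Mathlib

/-- Cyclic successor on `Fin n`. -/
def fnext {n : ℕ} (j : Fin n) : Fin n :=
  ⟨(j.val + 1) % n, Nat.mod_lt _ (Nat.lt_of_le_of_lt (Nat.zero_le _) j.isLt)⟩

/-- The labeling-gadget digraph on `[B]^k`: an edge of color `i` from `a` to `b`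
strictly increases coordinate `i`, strictly decreases coordinate `i+1` (mod `k`),
and fixes every other coordinate. -/
def gadgetAdj (B k : ℕ) (i : Fin k) (a b : Fin k → Fin B) : Prop :=
  a i < b i ∧ b (fnext i) < a (fnext i) ∧
    ∀ j : Fin k, j ≠ i → j ≠ fnext i → a j = b j

/-- cyclic predecessor -/
def fprev {n : ℕ} (hn : 0 < n) (j : Fin n) : Fin n :=
  ⟨(j.val + (n - 1)) % n, Nat.mod_lt _ hn⟩

lemma fnext_fprev {n : ℕ} (hn : 0 < n) (j : Fin n) : fnext (fprev hn j) = j := by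
  unfold fnext fprev
  apply Fin.ext
  simp only [Nat.mod_add_mod]
  have : j.val + (n - 1) + 1 = j.val + n := by omega
  rw [this, Nat.add_mod_right, Nat.mod_eq_of_lt j.isLt]

lemma fnext_iter_val {n : ℕ} (j : Fin n) (m : ℕ) :
    (fnext^[m] j).val = (j.val + m) % n := by
  induction m with
  | zero => simp [Nat.mod_eq_of_lt j.isLt]
  | succ m ih =>
    rw [Function.iterate_succ_apply']
    show ((fnext^[m] j).val + 1) % n = _
    rw [ih, Nat.mod_add_mod, Nat.add_assoc]

lemma fprev_iter_val {n : ℕ} (hn : 0 < n) (j : Fin n) (m : ℕ) :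
    ((fprev hn)^[m] j).val = (j.val + (n - 1) * m) % n := by
  induction m with
  | zero => simp [Nat.mod_eq_of_lt j.isLt]
  | succ m ih =>
    rw [Function.iterate_succ_apply']
    show (((fprev hn)^[m] j).val + (n - 1)) % n = _
    rw [ih, Nat.mod_add_mod]
    ring_nf

theorem stmt_12 (B k : ℕ) (hB : 2 ≤ B) (hk : 2 ≤ k) (n : ℕ) (hn : 0 < n)
    (c : Fin n → (Fin k → Fin B)) (hinj : Function.Injective c)
    (col : Fin n → Fin k)
    (hcyc : ∀ j : Fin n, gadgetAdj B k (col j) (c j) (c (fnext j))) :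
    ∀ i : Fin k, ∃ j : Fin n, col j = i := by
  have hkpos : 0 < k := by omega
  by_contra h
  push_neg at h
  obtain ⟨i, hi⟩ := h
  -- step: if color i is unused then so is its predecessor
  have step : ∀ i : Fin k, (∀ j, col j ≠ i) → ∀ j, col j ≠ fprev hkpos i := by
    intro i hi j hcol
    have hfni : fnext (col j) = i := by rw [hcol, fnext_fprev]
    -- coordinate i is non-increasing along edges
    have mono : ∀ j' : Fin n, c (fnext j') i ≤ c j' i := by
      intro j'
      obtain ⟨h1, h2, h3⟩ := hcyc j'
      by_cases hc : fnext (col j') = i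
      · exact le_of_lt (hc ▸ h2)
      · exact le_of_eq (h3 i (fun e => hi j' e.symm) (fun e => hc e.symm)).symm
    have chain : ∀ (m : ℕ) (j' : Fin n), c (fnext^[m] j') i ≤ c j' i := by
      intro m
      induction m with
      | zero => intro j'; exact le_rfl
      | succ m ih =>
        intro j'
        rw [Function.iterate_succ_apply]
        exact le_trans (ih (fnext j')) (mono j')
    -- around the cycle: coordinate i constant
    have hconst : ∀ j' : Fin n, c j' i ≤ c (fnext j') i := by
      intro j'
      have : fnext^[n - 1] (fnext j') = j' := by
        apply Fin.ext
        rw [← Function.iterate_succ_apply, fnext_iter_val]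
        have : j'.val + (n - 1 + 1) = j'.val + n := by omega
        rw [this, Nat.add_mod_right, Nat.mod_eq_of_lt j'.isLt]
      calc c j' i = c (fnext^[n-1] (fnext j')) i := by rw [this]
        _ ≤ c (fnext j') i := chain _ _
    -- but edge j strictly decreases coordinate i
    obtain ⟨h1, h2, h3⟩ := hcyc j
    rw [hfni] at h2
    exact absurd (hconst j) (not_le.mpr h2)
  -- iterate: all colors unused
  have iter : ∀ m : ℕ, ∀ j, col j ≠ (fprev hkpos)^[m] i := by
    intro m
    induction m with
    | zero => exact hi
    | succ m ih =>
      intro j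
      rw [Function.iterate_succ_apply']
      exact step _ ih j
  -- get contradiction with the color of edge 0
  set t := col ⟨0, hn⟩ with ht
  have : t = (fprev hkpos)^[i.val + k - t.val] i := by
    apply Fin.ext
    rw [fprev_iter_val]
    have ht' : t.val < k := t.isLt
    have hi' : i.val < k := i.isLt
    obtain ⟨e, rfl⟩ : ∃ e, k = e + 1 := ⟨k - 1, by omega⟩
    obtain ⟨d, hd⟩ : ∃ d, i.val + (e + 1) - t.val = d + 1 := ⟨i.val + (e+1) - t.val - 1, by omega⟩
    rw [hd]
    have : i.val + (e + 1 - 1) * (d + 1) = (e + 1) * d + t.val := by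
      have h1 : (e + 1 - 1) * (d + 1) = e * d + e := by rw [Nat.add_sub_cancel]; ring
      have h2 : (e + 1) * d = e * d + d := by ring
      rw [h1, h2]
      have : i.val + e = d + t.val := by omega
      omega
    rw [this, Nat.mul_add_mod, Nat.mod_eq_of_lt ht']
  exact iter _ ⟨0, hn⟩ this
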